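/- (Weak and strong Fenchel duality) Let X₁, X₂ be additive commutative groups, T : X₁ → X₂ additive, and f : X₁ → ℝ, g : X₂ → ℝ. Define in EReal: P = inf_{x ∈ X₁} (f(x) + g(T x)) and D = sup over additive φ : X₂ → ℝ of (− f⋆(φ ∘ T) − g⋆(−φ)), where f⋆(ψ) = sup_x (ψ(x) − f(x)) ∈ EReal. Then D ≤ P (weak duality). If moreover X₁ is semidivisible and f, g are convex, then P = D, and whenever P is real, the supremum defining D is attained by some additive φ : X₂ → ℝ. -/

import Mathlib

/-- A real-valued function on an additive commutative monoid is convex. -/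
def RConvexFn {X : Type*} [AddCommMonoid X] (f : X → ℝ) : Prop :=
  ∀ (n : ℕ), 0 < n → ∀ m : Fin n → ℕ, (∀ i, 0 < m i) →
    ∀ (xs : Fin n → X) (x : X), (∑ i, m i) • x = ∑ i, m i • xs i →
      ((∑ i, m i : ℕ) : ℝ) * f x ≤ ∑ i, (m i : ℝ) * f (xs i)

/-- The Fenchel conjugate `f⋆(ψ) = sup_x (ψ(x) − f(x))`, with values in the extended reals. -/
noncomputable def fenchelConj {X : Type*} (f : X → ℝ) (ψ : X → ℝ) : EReal :=
  ⨆ x : X, ((ψ x - f x : ℝ) : EReal)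

private theorem real_le_of_forall_pos' {a b : ℝ} (h : ∀ ε : ℝ, 0 < ε → a ≤ b + ε) : a ≤ b := by
  by_contra hlt
  push_neg at hlt
  have := h ((a - b) / 2) (by linarith)
  linarith

private theorem master {X₁ X₂ : Type*} [AddCommGroup X₁] [AddCommGroup X₂]
    (T : X₁ → X₂) (hT : ∀ x y, T (x + y) = T x + T y) (f : X₁ → ℝ) (g : X₂ → ℝ)
    (hdiv : ∃ p : ℕ, p.Prime ∧ Function.Surjective fun x : X₁ => p • x)
    (hf : RConvexFn f) (hg : RConvexFn g) (r : ℝ)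
    (hr1 : ∀ x, r ≤ f x + g (T x))
    (hr2 : ∀ ε : ℝ, 0 < ε → ∃ x, f x + g (T x) < r + ε)
    (n : ℕ) (K : Fin n → ℕ) (hK : ∀ j, 0 < K j) (h : Fin n → X₂) (x : Fin n → X₁)
    (hsum : ∑ j, K j • h j = 0) :
    ((∑ j, K j : ℕ) : ℝ) * r ≤ ∑ j, (K j : ℝ) * (f (x j) + g (T (x j) + h j)) := by
  classical
  obtain ⟨p, hp, hsurj⟩ := hdiv
  have hsurjpow : ∀ k : ℕ, Function.Surjective fun y : X₁ => (p ^ k) • y := by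
    intro k
    induction k with
    | zero => exact fun y => ⟨y, by simp⟩
    | succ k ih =>
      intro y
      obtain ⟨x₁, hx₁⟩ := ih y
      obtain ⟨x₂, hx₂⟩ := hsurj x₁
      refine ⟨x₂, ?_⟩
      simp only at hx₁ hx₂ ⊢
      rw [pow_succ, mul_smul, hx₂, hx₁]
  set S : ℕ := ∑ j, K j with hSdef
  have hSlt : S < p ^ S := Nat.lt_pow_self (n := S) hp.one_lt
  set N : ℕ := p ^ S with hNdef
  set M₀ : ℕ := N - S with hM₀def
  have hM₀pos : 0 < M₀ := by omega
  have hMS : M₀ + S = N := by omega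
  have hNpos : 0 < N := by omega
  apply real_le_of_forall_pos'
  intro ε hε
  obtain ⟨x₀, hx₀⟩ := hr2 (ε / N) (by positivity)
  obtain ⟨xt, hxt⟩ := hsurjpow S (M₀ • x₀ + ∑ j, K j • x j)
  simp only at hxt
  -- convexity of f
  have hfc := hf (n + 1) (Nat.succ_pos n) (Fin.cons M₀ K)
    (fun j => Fin.cases hM₀pos hK j) (Fin.cons x₀ x) xt ?_
  · -- convexity of g
    have hgc := hg (n + 1) (Nat.succ_pos n) (Fin.cons M₀ K)
      (fun j => Fin.cases hM₀pos hK j) (Fin.cons (T x₀) (fun j => T (x j) + h j)) (T xt) ?_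
    · simp only [Fin.sum_univ_succ, Fin.cons_zero, Fin.cons_succ] at hfc hgc
      have hcast : ((M₀ : ℝ) + (S : ℝ)) = (N : ℝ) := by
        exact_mod_cast congrArg (Nat.cast : ℕ → ℝ) hMS
      have hScast : ((∑ j, K j : ℕ) : ℝ) = (S : ℝ) := by rw [hSdef]
      have hrxt := hr1 xt
      have hsum_split : ∑ j, (K j : ℝ) * (f (x j) + g (T (x j) + h j))
          = (∑ j, (K j : ℝ) * f (x j)) + ∑ j, (K j : ℝ) * g (T (x j) + h j) := by
        rw [← Finset.sum_add_distrib]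
        congr 1
        ext j
        ring
      have hcast2 : ((M₀ + ∑ j, K j : ℕ) : ℝ) = (M₀ : ℝ) + (S : ℝ) := by
        push_cast [hSdef]; ring
      rw [hcast2] at hfc hgc
      have hM₀N : (M₀ : ℝ) ≤ (N : ℝ) := by exact_mod_cast Nat.le_of_lt_succ (by omega)
      have hεN : (M₀ : ℝ) * (ε / N) ≤ ε := by
        rw [mul_div_assoc'] --?
        rw [div_le_iff₀ (by positivity)]
        nlinarith [hε, hM₀N, (Nat.cast_pos.mpr hNpos : (0:ℝ) < N)]
      rw [hScast, hsum_split]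
      nlinarith [hfc, hgc, hrxt, hx₀, hεN, hcast,
        mul_le_mul_of_nonneg_left hrxt (by positivity : (0:ℝ) ≤ (N:ℝ)),
        mul_le_mul_of_nonneg_left hx₀.le (by positivity : (0:ℝ) ≤ (M₀:ℝ))]
    · -- representation for g
      simp only [Fin.sum_univ_succ, Fin.cons_zero, Fin.cons_succ]
      have hTsmul : ∀ (k : ℕ) (a : X₁), T (k • a) = k • T a := fun k a =>
        (AddMonoidHom.mk' T hT).map_nsmul k a
      have hTsum : T (M₀ • x₀ + ∑ j, K j • x j) = M₀ • T x₀ + ∑ j, K j • T (x j) := by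
        have h1 : T (M₀ • x₀ + ∑ j, K j • x j) = T (M₀ • x₀) + T (∑ j, K j • x j) := hT _ _
        have h2 : T (∑ j, K j • x j) = ∑ j, T (K j • x j) :=
          map_sum (AddMonoidHom.mk' T hT) (fun j => K j • x j) Finset.univ
        rw [h1, h2, hTsmul]
        congr 1
        exact Finset.sum_congr rfl fun j _ => hTsmul _ _
      have lhs : (M₀ + ∑ j, K j) • T xt = M₀ • T x₀ + ∑ j, K j • T (x j) := by
        rw [← hSdef, hMS, hNdef, ← hTsmul, hxt, hTsum]
      rw [lhs]
      have : ∑ j, K j • (T (x j) + h j) = (∑ j, K j • T (x j)) + ∑ j, K j • h j := by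
        rw [← Finset.sum_add_distrib]
        exact Finset.sum_congr rfl fun j _ => smul_add _ _ _
      rw [this, hsum, add_zero]
  · -- representation for f
    simp only [Fin.sum_univ_succ, Fin.cons_zero, Fin.cons_succ]
    rw [← hSdef, hMS, hNdef, hxt]

private theorem hb_exists {G : Type*} [AddCommGroup G] (p : G → ℝ)
    (hp0 : 0 ≤ p 0) (hp0' : p 0 ≤ 0)
    (hsub : ∀ (m n : ℕ), 0 < m → 0 < n → ∀ a b : G,
      p (m • a + n • b) ≤ (m : ℝ) * p a + (n : ℝ) * p b) :
    ∃ ψ : G → ℝ, (∀ x y, ψ (x + y) = ψ x + ψ y) ∧ ∀ z, ψ z ≤ p z := by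
  classical
  set S : Set (AddSubgroup (G × ℝ)) := {Γ | ∀ q ∈ Γ, q.2 ≤ p q.1} with hS
  have hbot : (⊥ : AddSubgroup (G × ℝ)) ∈ S := by
    intro q hq
    rw [AddSubgroup.mem_bot] at hq
    subst hq
    simpa using hp0
  obtain ⟨Γ, -, hΓS, hΓmax⟩ := zorn_le_nonempty₀ S
    (fun c hcS hchain y hy => by
      refine ⟨sSup c, ?_, fun Γ' hΓ' => le_sSup hΓ'⟩
      intro q hq
      rw [AddSubgroup.mem_sSup_of_directedOn ⟨y, hy⟩ hchain.directedOn] at hq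
      obtain ⟨Γ', hΓ'c, hqΓ'⟩ := hq
      exact hcS hΓ'c q hqΓ') ⊥ hbot
  -- uniqueness of second coordinates
  have huniq : ∀ z t t', (z, t) ∈ Γ → (z, t') ∈ Γ → t = t' := by
    intro z t t' h1 h2
    have hdiff : ((z, t) - (z, t') : G × ℝ) ∈ Γ := sub_mem h1 h2
    have hdiff' : ((z, t') - (z, t) : G × ℝ) ∈ Γ := sub_mem h2 h1
    have e1 : t - t' ≤ p 0 := by
      have := hΓS _ hdiff
      simpa using this
    have e2 : t' - t ≤ p 0 := by
      have := hΓS _ hdiff'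
      simpa using this
    have := hp0'
    linarith
  -- totality
  have htotal : ∀ z : G, ∃ t : ℝ, (z, t) ∈ Γ := by
    intro z
    by_contra hz
    push_neg at hz
    set L : Set ℝ := {t | ∃ q ∈ Γ, ∃ m : ℕ, 0 < m ∧ t = (q.2 - p (q.1 - m • z)) / m} with hL
    have hLne : L.Nonempty := ⟨_, ⟨0, zero_mem Γ, 1, one_pos, rfl⟩⟩
    -- consistency
    have hcons : ∀ t ∈ L, ∀ q' ∈ Γ, ∀ n : ℕ, 0 < n → t ≤ (p (q'.1 + n • z) - q'.2) / n := by
      rintro t ⟨q, hq, m, hm, rfl⟩ q' hq' n hn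
      rw [div_le_div_iff₀ (by positivity) (by positivity)]
      have hmem : ((n • q + m • q' : G × ℝ)) ∈ Γ := add_mem (nsmul_mem hq n) (nsmul_mem hq' m)
      have hle : (n • q + m • q' : G × ℝ).2 ≤ p ((n • q + m • q' : G × ℝ).1) := hΓS _ hmem
      have h1 : (n • q + m • q' : G × ℝ).2 = (n : ℝ) * q.2 + (m : ℝ) * q'.2 := by
        simp [Prod.snd_add, nsmul_eq_mul]
      have h2 : ((n • q + m • q' : G × ℝ)).1 = n • (q.1 - m • z) + m • (q'.1 + n • z) := by
        simp only [Prod.fst_add, Prod.smul_fst]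
        rw [smul_sub, smul_add, smul_smul, smul_smul, Nat.mul_comm]
        abel
      have h3 : p ((n • q + m • q' : G × ℝ).1) ≤ (n : ℝ) * p (q.1 - m • z) + (m : ℝ) * p (q'.1 + n • z) := by
        rw [h2]; exact hsub n m hn hm _ _
      rw [h1] at hle
      have := hle.trans h3
      nlinarith [this]
    have hLbdd : BddAbove L := by
      exact ⟨_, fun t ht => hcons t ht 0 (zero_mem Γ) 1 one_pos⟩
    set c : ℝ := sSup L with hc
    -- the extended subgroup
    set Γ' : AddSubgroup (G × ℝ) := Γ ⊔ AddSubgroup.zmultiples (z, c) with hΓ'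
    have hΓ'S : Γ' ∈ S := by
      intro q hq
      rw [hΓ', AddSubgroup.mem_sup] at hq
      obtain ⟨a, ha, b, hb, rfl⟩ := hq
      rw [AddSubgroup.mem_zmultiples_iff] at hb
      obtain ⟨k, rfl⟩ := hb
      rcases lt_trichotomy k 0 with hk | hk | hk
      · -- k negative : k = -m, need a.2 - m c ≤ p (a.1 - m • z)
        set m : ℕ := (-k).toNat with hmdef
        have hm : 0 < m := by omega
        have hkm : (k : ℤ) = -(m : ℤ) := by omega
        have hmemL : (a.2 - p (a.1 - m • z)) / m ∈ L := ⟨a, ha, m, hm, rfl⟩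
        have hcge : (a.2 - p (a.1 - m • z)) / m ≤ c := le_csSup hLbdd hmemL
        have key : a.2 - (m : ℝ) * c ≤ p (a.1 - m • z) := by
          rw [div_le_iff₀ (by positivity)] at hcge
          linarith [hcge]
        have h1 : (a + k • (z, c)).1 = a.1 - m • z := by
          simp only [Prod.fst_add, Prod.smul_fst, hkm]
          push_cast
          rw [neg_smul, natCast_zsmul]
          abel
        have h2 : (a + k • (z, c)).2 = a.2 - (m : ℝ) * c := by
          simp only [Prod.snd_add, Prod.smul_snd, hkm, zsmul_eq_mul]
          push_cast
          ring
        rw [h1, h2]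
        exact key
      · subst hk
        simpa using hΓS _ ha
      · -- k positive
        set n : ℕ := k.toNat with hndef
        have hn : 0 < n := by omega
        have hkn : (k : ℤ) = (n : ℤ) := by omega
        have hcle : c ≤ (p (a.1 + n • z) - a.2) / n := by
          apply csSup_le hLne
          intro t ht
          exact hcons t ht a ha n hn
        have key : a.2 + (n : ℝ) * c ≤ p (a.1 + n • z) := by
          rw [le_div_iff₀ (by positivity)] at hcle
          linarith [hcle]
        have h1 : (a + k • (z, c)).1 = a.1 + n • z := by
          simp only [Prod.fst_add, Prod.smul_fst, hkn, natCast_zsmul]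
        have h2 : (a + k • (z, c)).2 = a.2 + (n : ℝ) * c := by
          simp only [Prod.snd_add, Prod.smul_snd, hkn, zsmul_eq_mul]
          push_cast
          ring
        rw [h1, h2]
        exact key
    have hle : Γ ≤ Γ' := le_sup_left
    have : Γ' ≤ Γ := hΓmax hΓ'S hle
    have hzc : ((z, c) : G × ℝ) ∈ Γ' := by
      apply AddSubgroup.mem_sup_right
      exact AddSubgroup.mem_zmultiples _
    exact hz c (this hzc)
  choose ψ hψ using htotal
  refine ⟨ψ, fun x y => ?_, fun z => ?_⟩
  · have : (x + y, ψ x + ψ y) ∈ Γ := by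
      have := add_mem (hψ x) (hψ y)
      simpa using this
    exact huniq _ _ _ (hψ (x + y)) this
  · exact hΓS _ (hψ z)

private theorem construction {X₁ X₂ : Type*} [AddCommGroup X₁] [AddCommGroup X₂]
    (T : X₁ → X₂) (hT : ∀ x y, T (x + y) = T x + T y) (f : X₁ → ℝ) (g : X₂ → ℝ)
    (hdiv : ∃ p : ℕ, p.Prime ∧ Function.Surjective fun x : X₁ => p • x)
    (hf : RConvexFn f) (hg : RConvexFn g) (r : ℝ)
    (hr1 : ∀ x, r ≤ f x + g (T x))
    (hr2 : ∀ ε : ℝ, 0 < ε → ∃ x, f x + g (T x) < r + ε) :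
    ∃ ψ : X₂ → ℝ, (∀ a b, ψ (a + b) = ψ a + ψ b) ∧
      ∀ (x : X₁) (z : X₂), ψ (z - T x) ≤ f x + g z - r := by
  classical
  set vset : X₂ → Set ℝ := fun z => {t | ∃ x, t = f x + g (T x + z)} with hvset
  have hvne : ∀ z, (vset z).Nonempty := fun z => ⟨f 0 + g (T 0 + z), 0, rfl⟩
  have hlow : ∀ z, ∀ t ∈ vset z, 2 * r - (f 0 + g (T 0 + -z)) ≤ t := by
    rintro z t ⟨x', rfl⟩
    have hm := master T hT f g hdiv hf hg r hr1 hr2 2 ![1, 1] (by decide) ![z, -z] ![x', 0]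
      (by simp [Fin.sum_univ_two])
    simp [Fin.sum_univ_two] at hm
    linarith
  have hvbdd : ∀ z, BddBelow (vset z) := fun z => ⟨_, hlow z⟩
  set v : X₂ → ℝ := fun z => sInf (vset z) with hvdef
  have hvle : ∀ z x, v z ≤ f x + g (T x + z) := fun z x => csInf_le (hvbdd z) ⟨x, rfl⟩
  have hveps : ∀ z, ∀ ε : ℝ, 0 < ε → ∃ x, f x + g (T x + z) < v z + ε := by
    intro z ε hε
    obtain ⟨t, ht, htlt⟩ := exists_lt_of_csInf_lt (hvne z) (by linarith : sInf (vset z) < v z + ε)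
    obtain ⟨x, rfl⟩ := ht
    exact ⟨x, htlt⟩
  have hv0le : v 0 ≤ r := by
    apply real_le_of_forall_pos'
    intro ε hε
    obtain ⟨x, hx⟩ := hr2 ε hε
    have := hvle 0 x
    rw [add_zero] at this
    linarith
  have hv0ge : r ≤ v 0 := by
    apply le_csInf (hvne 0)
    rintro t ⟨x, rfl⟩
    have := hr1 x
    rw [add_zero]
    linarith
  have hv0 : v 0 = r := le_antisymm hv0le hv0ge
  -- key lemma
  have hkey : ∀ (k : ℕ) (K : Fin k → ℕ), (∀ j, 0 < K j) → ∀ h : Fin k → X₂,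
      ∑ j, K j • h j = 0 → 0 ≤ ∑ j, (K j : ℝ) * (v (h j) - r) := by
    intro k K hK h hsum
    have claim : ∀ ε : ℝ, 0 < ε → 0 ≤ (∑ j, (K j : ℝ) * (v (h j) - r)) + ((∑ j, K j : ℕ) : ℝ) * ε := by
      intro ε hε
      choose xs hxs using fun j => hveps (h j) ε hε
      have hm := master T hT f g hdiv hf hg r hr1 hr2 k K hK h xs hsum
      have hstep : ∑ j, (K j : ℝ) * (f (xs j) + g (T (xs j) + h j))
          ≤ ∑ j, (K j : ℝ) * (v (h j) + ε) := by
        apply Finset.sum_le_sum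
        intro j _
        exact mul_le_mul_of_nonneg_left (hxs j).le (by positivity)
      have hexpand : ∑ j, (K j : ℝ) * (v (h j) + ε)
          = (∑ j, (K j : ℝ) * (v (h j) - r)) + ((∑ j, K j : ℕ) : ℝ) * r
            + ((∑ j, K j : ℕ) : ℝ) * ε := by
        push_cast
        rw [Finset.sum_mul, Finset.sum_mul, ← Finset.sum_add_distrib, ← Finset.sum_add_distrib]
        apply Finset.sum_congr rfl
        intro j _
        ring
      rw [hexpand] at hstep
      linarith [hm.trans hstep]
    rcases Nat.eq_zero_or_pos (∑ j, K j) with hS | hS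
    · rcases Nat.eq_zero_or_pos k with hk0 | hk0
      · subst hk0
        simp
      · exfalso
        have hpos : 0 < ∑ j, K j :=
          Finset.sum_pos' (fun j _ => Nat.zero_le _) ⟨⟨0, hk0⟩, Finset.mem_univ _, hK _⟩
        omega
    · apply real_le_of_forall_pos'
      intro ε hε
      have hSR : (0 : ℝ) < ((∑ j, K j : ℕ) : ℝ) := by exact_mod_cast hS
      have := claim (ε / ((∑ j, K j : ℕ) : ℝ)) (by positivity)
      rw [mul_div_cancel₀ _ (ne_of_gt hSR)] at this
      linarith
  -- the sublinear functional
  set pset : X₂ → Set ℝ := fun z => {t | ∃ (k : ℕ) (K : Fin k → ℕ) (h : Fin k → X₂) (N : ℕ),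
    0 < N ∧ (∀ j, 0 < K j) ∧ N • z = ∑ j, K j • h j ∧
    t = (∑ j, (K j : ℝ) * (v (h j) - r)) / N} with hpset
  have hpmem : ∀ z, ((∑ j : Fin 1, ((fun _ : Fin 1 => (1:ℕ)) j : ℝ) * (v ((fun _ : Fin 1 => z) j) - r)) / ((1:ℕ):ℝ)) ∈ pset z := by
    intro z
    exact ⟨1, fun _ => 1, fun _ => z, 1, one_pos, fun _ => one_pos, by simp, by norm_num⟩
  have hpne : ∀ z, (pset z).Nonempty := fun z => ⟨_, hpmem z⟩
  have hplow : ∀ z, ∀ t ∈ pset z, -(v (-z) - r) ≤ t := by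
    rintro z t ⟨k, K, h, N, hN, hKpos, hrep, rfl⟩
    have hzero : ∑ j : Fin (k + 1), (Fin.cons N K : Fin (k+1) → ℕ) j • (Fin.cons (-z) h : Fin (k+1) → X₂) j = 0 := by
      simp only [Fin.sum_univ_succ, Fin.cons_zero, Fin.cons_succ]
      rw [← hrep, smul_neg]
      abel
    have h0 := hkey (k + 1) (Fin.cons N K) (fun j => Fin.cases hN hKpos j) (Fin.cons (-z) h) hzero
    simp only [Fin.sum_univ_succ, Fin.cons_zero, Fin.cons_succ] at h0
    have hNR : (0 : ℝ) < (N : ℝ) := by exact_mod_cast hN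
    rw [le_div_iff₀ hNR]
    nlinarith [h0]
  have hpbdd : ∀ z, BddBelow (pset z) := fun z => ⟨_, hplow z⟩
  set p : X₂ → ℝ := fun z => sInf (pset z) with hpdef
  have hptriv : ∀ z, p z ≤ v z - r := by
    intro z
    have := csInf_le (hpbdd z) (hpmem z)
    simpa using this
  have hp0 : 0 ≤ p 0 := by
    apply le_csInf (hpne 0)
    intro t ht
    have := hplow 0 t ht
    rw [neg_zero, hv0] at this
    simpa using this
  have hp0' : p 0 ≤ 0 := by
    have := hptriv 0
    rw [hv0] at this
    simpa using this
  -- subadditivity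
  have hpsub : ∀ (m n : ℕ), 0 < m → 0 < n → ∀ a b : X₂,
      p (m • a + n • b) ≤ (m : ℝ) * p a + (n : ℝ) * p b := by
    intro m n hm hn a b
    apply real_le_of_forall_pos'
    intro ε hε
    set δ : ℝ := ε / (m + n) with hδ
    have hδpos : 0 < δ := by
      have : (0:ℝ) < (m:ℝ) + (n:ℝ) := by positivity
      positivity
    obtain ⟨t₁, ht₁mem, ht₁⟩ := exists_lt_of_csInf_lt (hpne a) (by linarith : sInf (pset a) < p a + δ)
    obtain ⟨t₂, ht₂mem, ht₂⟩ := exists_lt_of_csInf_lt (hpne b) (by linarith : sInf (pset b) < p b + δ)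
    obtain ⟨k₁, K₁, h₁, N₁, hN₁, hK₁, hrep₁, rfl⟩ := ht₁mem
    obtain ⟨k₂, K₂, h₂, N₂, hN₂, hK₂, hrep₂, rfl⟩ := ht₂mem
    set K' : Fin (k₁ + k₂) → ℕ := Fin.append (fun j => m * N₂ * K₁ j) (fun j => n * N₁ * K₂ j) with hK'
    set h' : Fin (k₁ + k₂) → X₂ := Fin.append h₁ h₂ with hh'
    have hmem' : ((∑ j, (K' j : ℝ) * (v (h' j) - r)) / ((N₁ * N₂ : ℕ) : ℝ)) ∈ pset (m • a + n • b) := by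
      refine ⟨k₁ + k₂, K', h', N₁ * N₂, Nat.mul_pos hN₁ hN₂, ?_, ?_, rfl⟩
      · intro j
        refine Fin.addCases (fun i => ?_) (fun i => ?_) j
        · rw [hK', Fin.append_left]
          exact Nat.mul_pos (Nat.mul_pos hm hN₂) (hK₁ i)
        · rw [hK', Fin.append_right]
          exact Nat.mul_pos (Nat.mul_pos hn hN₁) (hK₂ i)
      · rw [Fin.sum_univ_add]
        simp only [hK', hh', Fin.append_left, Fin.append_right]
        have e1 : ∑ j, (m * N₂ * K₁ j) • h₁ j = (m * N₂) • (N₁ • a) := by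
          rw [hrep₁, Finset.smul_sum]
          exact Finset.sum_congr rfl fun j _ => (mul_smul _ _ _)
        have e2 : ∑ j, (n * N₁ * K₂ j) • h₂ j = (n * N₁) • (N₂ • b) := by
          rw [hrep₂, Finset.smul_sum]
          exact Finset.sum_congr rfl fun j _ => (mul_smul _ _ _)
        rw [e1, e2, smul_smul, smul_smul, smul_add, smul_smul, smul_smul]
        congr 1
        · congr 1
          ring
        · congr 1
          ring
    have hle := csInf_le (hpbdd _) hmem'
    have hval : (∑ j, (K' j : ℝ) * (v (h' j) - r)) / ((N₁ * N₂ : ℕ) : ℝ)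
        = (m : ℝ) * ((∑ j, (K₁ j : ℝ) * (v (h₁ j) - r)) / N₁)
          + (n : ℝ) * ((∑ j, (K₂ j : ℝ) * (v (h₂ j) - r)) / N₂) := by
      rw [Fin.sum_univ_add]
      simp only [hK', hh', Fin.append_left, Fin.append_right]
      have hN₁R : ((N₁:ℕ) : ℝ) ≠ 0 := by positivity
      have hN₂R : ((N₂:ℕ) : ℝ) ≠ 0 := by positivity
      have e1 : ∑ j, ((m * N₂ * K₁ j : ℕ) : ℝ) * (v (h₁ j) - r)
          = (m : ℝ) * (N₂ : ℝ) * ∑ j, (K₁ j : ℝ) * (v (h₁ j) - r) := by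
        rw [Finset.mul_sum]
        apply Finset.sum_congr rfl
        intro j _
        push_cast
        ring
      have e2 : ∑ j, ((n * N₁ * K₂ j : ℕ) : ℝ) * (v (h₂ j) - r)
          = (n : ℝ) * (N₁ : ℝ) * ∑ j, (K₂ j : ℝ) * (v (h₂ j) - r) := by
        rw [Finset.mul_sum]
        apply Finset.sum_congr rfl
        intro j _
        push_cast
        ring
      rw [e1, e2]
      push_cast
      field_simp
    rw [hval] at hle
    have hmn0 : (0:ℝ) < (m:ℝ) := by exact_mod_cast hm
    have hnn0 : (0:ℝ) < (n:ℝ) := by exact_mod_cast hn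
    have hfin : (m:ℝ) * δ + (n:ℝ) * δ = ε := by
      rw [hδ]
      field_simp
    nlinarith [hle, ht₁, ht₂]
  obtain ⟨ψ, hψadd, hψle⟩ := hb_exists p hp0 hp0' hpsub
  refine ⟨ψ, hψadd, fun x z => ?_⟩
  have h1 : ψ (z - T x) ≤ v (z - T x) - r := (hψle _).trans (hptriv _)
  have h2 : v (z - T x) ≤ f x + g (T x + (z - T x)) := hvle _ x
  have h3 : T x + (z - T x) = z := by abel
  rw [h3] at h2
  linarith
private theorem ereal_cases (x : EReal) (hx : x ≠ ⊤) : x = ⊥ ∨ ∃ r : ℝ, x = (r : EReal) := by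
  induction x using EReal.rec with
  | bot => exact Or.inl rfl
  | coe r => exact Or.inr ⟨r, rfl⟩
  | top => exact absurd rfl hx


/-- Weak and strong Fenchel duality: with
`P = inf_x (f(x) + g(Tx))` and `D = sup_{φ additive} (−f⋆(φ∘T) − g⋆(−φ))` in the extended reals,
one always has `D ≤ P`; if moreover `X₁` is semidivisible and `f, g` are convex then `P = D`,
and the supremum defining `D` is attained whenever `P` is real. -/
theorem fenchel_duality {X₁ X₂ : Type*} [AddCommGroup X₁] [AddCommGroup X₂]
    (T : X₁ → X₂) (hT : ∀ x y, T (x + y) = T x + T y) (f : X₁ → ℝ) (g : X₂ → ℝ) :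
    sSup {d : EReal | ∃ φ : X₂ → ℝ, (∀ x y, φ (x + y) = φ x + φ y) ∧
        d = -fenchelConj f (fun x => φ (T x)) - fenchelConj g (fun x => -φ x)} ≤
      ⨅ x : X₁, ((f x + g (T x) : ℝ) : EReal) ∧
    ((∃ p : ℕ, p.Prime ∧ Function.Surjective fun x : X₁ => p • x) →
      RConvexFn f → RConvexFn g →
      (⨅ x : X₁, ((f x + g (T x) : ℝ) : EReal)) =
        sSup {d : EReal | ∃ φ : X₂ → ℝ, (∀ x y, φ (x + y) = φ x + φ y) ∧
          d = -fenchelConj f (fun x => φ (T x)) - fenchelConj g (fun x => -φ x)} ∧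
      ∀ r : ℝ, (⨅ x : X₁, ((f x + g (T x) : ℝ) : EReal)) = (r : EReal) →
        ∃ φ : X₂ → ℝ, (∀ x y, φ (x + y) = φ x + φ y) ∧
          -fenchelConj f (fun x => φ (T x)) - fenchelConj g (fun x => -φ x) =
            ⨅ x : X₁, ((f x + g (T x) : ℝ) : EReal)) := by
  classical
  set P : EReal := ⨅ x : X₁, ((f x + g (T x) : ℝ) : EReal) with hPdef
  set Dset : Set EReal := {d : EReal | ∃ φ : X₂ → ℝ, (∀ x y, φ (x + y) = φ x + φ y) ∧
      d = -fenchelConj f (fun x => φ (T x)) - fenchelConj g (fun x => -φ x)} with hDset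
  -- weak duality
  have hweak : ∀ d ∈ Dset, d ≤ P := by
    rintro d ⟨φ, hφ, rfl⟩
    apply le_iInf
    intro x
    have h1 : -fenchelConj f (fun x => φ (T x)) ≤ ((f x - φ (T x) : ℝ) : EReal) := by
      have hle : ((φ (T x) - f x : ℝ) : EReal) ≤ fenchelConj f (fun x => φ (T x)) :=
        le_iSup (fun x => ((φ (T x) - f x : ℝ) : EReal)) x
      have := EReal.neg_le_neg_iff.mpr hle
      rw [← EReal.coe_neg] at this
      convert this using 2
      ring
    have h2 : -fenchelConj g (fun z => -φ z) ≤ ((g (T x) + φ (T x) : ℝ) : EReal) := by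
      have hle : ((-φ (T x) - g (T x) : ℝ) : EReal) ≤ fenchelConj g (fun z => -φ z) :=
        le_iSup (fun z => ((-φ z - g z : ℝ) : EReal)) (T x)
      have := EReal.neg_le_neg_iff.mpr hle
      rw [← EReal.coe_neg] at this
      convert this using 2
      ring
    calc -fenchelConj f (fun x => φ (T x)) - fenchelConj g (fun x => -φ x)
        = -fenchelConj f (fun x => φ (T x)) + -fenchelConj g (fun x => -φ x) := by
          rw [sub_eq_add_neg]
      _ ≤ ((f x - φ (T x) : ℝ) : EReal) + ((g (T x) + φ (T x) : ℝ) : EReal) := add_le_add h1 h2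
      _ = ((f x + g (T x) : ℝ) : EReal) := by
          rw [← EReal.coe_add]
          congr 1
          ring
  refine ⟨sSup_le hweak, ?_⟩
  intro hdiv hf hg
  -- attainment given P real
  have hatt : ∀ r : ℝ, P = (r : EReal) →
      ∃ φ : X₂ → ℝ, (∀ x y, φ (x + y) = φ x + φ y) ∧
        -fenchelConj f (fun x => φ (T x)) - fenchelConj g (fun x => -φ x) = P := by
    intro r hr
    have hr1 : ∀ x, r ≤ f x + g (T x) := by
      intro x
      have : P ≤ ((f x + g (T x) : ℝ) : EReal) := iInf_le _ x
      rw [hr] at this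
      exact_mod_cast this
    have hr2 : ∀ ε : ℝ, 0 < ε → ∃ x, f x + g (T x) < r + ε := by
      intro ε hε
      by_contra hcon
      push_neg at hcon
      have : ((r + ε : ℝ) : EReal) ≤ P := le_iInf fun x => by exact_mod_cast hcon x
      rw [hr] at this
      have : r + ε ≤ r := by exact_mod_cast this
      linarith
    obtain ⟨ψ, hψadd, hψ⟩ := construction T hT f g hdiv hf hg r hr1 hr2
    have hψ0 : ψ 0 = 0 := by
      have := hψadd 0 0
      rw [add_zero] at this
      linarith
    have hψneg : ∀ a, ψ (-a) = -ψ a := by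
      intro a
      have := hψadd a (-a)
      rw [add_neg_cancel, hψ0] at this
      linarith
    have hT0 : T 0 = 0 := by
      have := hT 0 0
      rw [add_zero] at this
      exact add_eq_left.mp this.symm
    set φ : X₂ → ℝ := fun z => -ψ z with hφdef
    have hφadd : ∀ x y, φ (x + y) = φ x + φ y := by
      intro x y
      simp only [hφdef, hψadd]
      ring
    -- real inequalities
    have k1 : ∀ x, φ (T x) - f x ≤ g 0 - r := by
      intro x
      have := hψ x 0
      rw [zero_sub, hψneg] at this
      simp only [hφdef]
      linarith
    have k2 : ∀ z, -φ z - g z ≤ f 0 - r := by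
      intro z
      have := hψ 0 z
      rw [hT0, sub_zero] at this
      simp only [hφdef]
      linarith
    have k3 : ∀ x z, (φ (T x) - f x) + (-φ z - g z) ≤ -r := by
      intro x z
      have h := hψ x z
      have heq : ψ (z - T x) = ψ z - ψ (T x) := by
        have := hψadd (z - T x) (T x)
        rw [sub_add_cancel] at this
        linarith
      rw [heq] at h
      simp only [hφdef]
      linarith
    -- finiteness of the conjugates
    set A : EReal := fenchelConj f (fun x => φ (T x)) with hAdef
    set B : EReal := fenchelConj g (fun z => -φ z) with hBdef
    have hAub : A ≤ ((g 0 - r : ℝ) : EReal) := iSup_le fun x => EReal.coe_le_coe_iff.mpr (k1 x)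
    have hBub : B ≤ ((f 0 - r : ℝ) : EReal) := iSup_le fun z => EReal.coe_le_coe_iff.mpr (k2 z)
    have hAlb : ((φ (T 0) - f 0 : ℝ) : EReal) ≤ A := le_iSup (fun x => ((φ (T x) - f x : ℝ) : EReal)) 0
    have hBlb : ((-φ 0 - g 0 : ℝ) : EReal) ≤ B := le_iSup (fun z => ((-φ z - g z : ℝ) : EReal)) 0
    have hAne_top : A ≠ ⊤ := fun h => by
      rw [h, top_le_iff] at hAub
      exact EReal.coe_ne_top _ hAub
    have hAne_bot : A ≠ ⊥ := fun h => by
      rw [h, le_bot_iff] at hAlb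
      exact EReal.coe_ne_bot _ hAlb
    have hBne_top : B ≠ ⊤ := fun h => by
      rw [h, top_le_iff] at hBub
      exact EReal.coe_ne_top _ hBub
    have hBne_bot : B ≠ ⊥ := fun h => by
      rw [h, le_bot_iff] at hBlb
      exact EReal.coe_ne_bot _ hBlb
    obtain ⟨a, hA⟩ : ∃ a : ℝ, A = (a : EReal) := ⟨A.toReal, (EReal.coe_toReal hAne_top hAne_bot).symm⟩
    obtain ⟨b, hB⟩ : ∃ b : ℝ, B = (b : EReal) := ⟨B.toReal, (EReal.coe_toReal hBne_top hBne_bot).symm⟩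
    -- a + b ≤ -r
    have hab : a + b ≤ -r := by
      have hA' : A ≤ ((-r - b : ℝ) : EReal) := by
        rw [hAdef]
        apply iSup_le
        intro x
        rw [EReal.coe_le_coe_iff]
        have hB' : B ≤ ((-r - (φ (T x) - f x) : ℝ) : EReal) := by
          rw [hBdef]
          apply iSup_le
          intro z
          rw [EReal.coe_le_coe_iff]
          have := k3 x z
          dsimp only
          linarith
        rw [hB, EReal.coe_le_coe_iff] at hB'
        linarith
      rw [hA, EReal.coe_le_coe_iff] at hA'
      linarith
    refine ⟨φ, hφadd, ?_⟩
    have hval : -A - B = ((-a - b : ℝ) : EReal) := by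
      rw [hA, hB, ← EReal.coe_neg, ← EReal.coe_sub]
    have hge : ((r : ℝ) : EReal) ≤ -A - B := by
      rw [hval, EReal.coe_le_coe_iff]
      linarith
    have hmem : -A - B ∈ Dset := ⟨φ, hφadd, rfl⟩
    have hle : -A - B ≤ P := hweak _ hmem
    rw [hr]
    exact le_antisymm (by rw [← hr]; exact hle) hge
  constructor
  · -- P = D
    have hPne_top : P ≠ ⊤ := by
      intro h
      have : P ≤ ((f 0 + g (T 0) : ℝ) : EReal) := iInf_le _ 0
      rw [h, top_le_iff] at this
      exact EReal.coe_ne_top _ this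
    rcases ereal_cases P hPne_top with hbot | ⟨r, hr⟩
    · have hDle : sSup Dset ≤ P := sSup_le hweak
      rw [hbot, le_bot_iff] at hDle
      rw [hbot, hDle]
    · obtain ⟨φ, hφadd, hφeq⟩ := hatt r hr
      have hmem : -fenchelConj f (fun x => φ (T x)) - fenchelConj g (fun x => -φ x) ∈ Dset :=
        ⟨φ, hφadd, rfl⟩
      have h1 : P ≤ sSup Dset := hφeq ▸ le_sSup hmem
      exact le_antisymm h1 (sSup_le hweak)
  · intro r hr
    obtain ⟨φ, hφadd, hφeq⟩ := hatt r hr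
    exact ⟨φ, hφadd, hφeq⟩
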